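/- Define F : ℝ⁴ → ℝ⁴ by F(x¹,x²,x³,y) = ((x¹)² + (x²)² + (x³)² − y², 2x¹y, 2x²y, 2x³y) (the Hopf construction on the quaternions). Then for all (x¹,x²,x³,y) ∈ ℝ⁴: (i) |F(x¹,x²,x³,y)|² = ((x¹)²+(x²)²+(x³)²+y²)², so F maps S³ into S³; and (ii) |DF(x¹,x²,x³,y)|² = 8((x¹)² + (x²)² + (x³)²) + 16y². In particular, |DF|² is not constant on the unit sphere S³: it takes the value 8 at (1,0,0,0) and the value 16 at (0,0,0,1). -/

import Mathlib

/-!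
STATEMENT 17: The Hopf construction F : ℝ⁴ → ℝ⁴,
F(x¹,x²,x³,y) = ((x¹)²+(x²)²+(x³)²−y², 2x¹y, 2x²y, 2x³y), satisfies:
(i) |F|² = ((x¹)²+(x²)²+(x³)²+y²)² (so F maps S³ into S³);
(ii) |DF|² = 8((x¹)²+(x²)²+(x³)²) + 16y².
In particular |DF|² is not constant on S³: it equals 8 at (1,0,0,0) and 16 at
(0,0,0,1).
-/

/-- Partial derivative of a map `ℝⁿ → ℝᵐ` in the `j`-th coordinate direction. -/
noncomputable def pd {n m : ℕ} (F : (Fin n → ℝ) → (Fin m → ℝ)) (j : Fin n)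
    (x : Fin n → ℝ) : Fin m → ℝ :=
  fderiv ℝ F x (Pi.single j 1)

/-- Squared Frobenius norm of the total derivative of `F` at `x`. -/
noncomputable def frobSq {n m : ℕ} (F : (Fin n → ℝ) → (Fin m → ℝ)) (x : Fin n → ℝ) : ℝ :=
  ∑ i, ∑ j, (pd F j x i) ^ 2

/-- The Hopf construction on the quaternions, as a quadratic map `ℝ⁴ → ℝ⁴`,
with coordinates `(x¹,x²,x³,y) = (x 0, x 1, x 2, x 3)`. -/
def hopfF : (Fin 4 → ℝ) → Fin 4 → ℝ := fun x =>
  ![(x 0) ^ 2 + (x 1) ^ 2 + (x 2) ^ 2 - (x 3) ^ 2,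
    2 * x 0 * x 3, 2 * x 1 * x 3, 2 * x 2 * x 3]

lemma hasFD_proj (a : Fin 4) (x : Fin 4 → ℝ) :
    HasFDerivAt (fun x : Fin 4 → ℝ => x a)
      (ContinuousLinearMap.proj a (R := ℝ) (φ := fun _ : Fin 4 => ℝ)) x :=
  hasFDerivAt_apply a x

lemma fd0 (x v : Fin 4 → ℝ) :
    fderiv ℝ (fun x : Fin 4 → ℝ => (x 0)^2 + (x 1)^2 + (x 2)^2 - (x 3)^2) x v
      = 2*x 0*v 0 + 2*x 1*v 1 + 2*x 2*v 2 - 2*x 3*v 3 := by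
  have e : (fun x : Fin 4 → ℝ => (x 0)^2 + (x 1)^2 + (x 2)^2 - (x 3)^2)
      = fun x : Fin 4 → ℝ => x 0 * x 0 + x 1 * x 1 + x 2 * x 2 - x 3 * x 3 := by
    funext x; ring
  rw [e]
  have h := ((((hasFD_proj 0 x).mul (hasFD_proj 0 x)).add
      ((hasFD_proj 1 x).mul (hasFD_proj 1 x))).add
      ((hasFD_proj 2 x).mul (hasFD_proj 2 x))).sub
      ((hasFD_proj 3 x).mul (hasFD_proj 3 x))
  rw [(show HasFDerivAt (fun x : Fin 4 → ℝ => x 0 * x 0 + x 1 * x 1 + x 2 * x 2 - x 3 * x 3) _ x from h).fderiv]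
  simp
  ring

lemma fdm (a : Fin 4) (x v : Fin 4 → ℝ) :
    fderiv ℝ (fun x : Fin 4 → ℝ => 2 * x a * x 3) x v
      = 2 * x a * v 3 + 2 * x 3 * v a := by
  have e : (fun x : Fin 4 → ℝ => 2 * x a * x 3)
      = fun x : Fin 4 → ℝ => (2:ℝ) • (x a * x 3) := by funext x; simp; ring
  rw [e]
  have h := (((hasFD_proj a x).mul (hasFD_proj 3 x)).const_smul (2:ℝ))
  rw [(show HasFDerivAt (fun x : Fin 4 → ℝ => (2:ℝ) • (x a * x 3)) _ x from h).fderiv]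
  simp
  ring

lemma hopf_comp_diff (x : Fin 4 → ℝ) (i : Fin 4) :
    DifferentiableAt ℝ (fun x => hopfF x i) x := by
  fin_cases i <;> simp [hopfF] <;> fun_prop


lemma pd_unfold (j : Fin 4) (x : Fin 4 → ℝ) (i : Fin 4) :
    pd hopfF j x i = fderiv ℝ (fun x => hopfF x i) x (Pi.single j 1) := by
  have hF : hopfF = fun x (i : Fin 4) => hopfF x i := rfl
  rw [pd, hF, fderiv_pi (fun i => hopf_comp_diff x i)]
  simp only [ContinuousLinearMap.pi_apply]

lemma pd_hopf0 (j : Fin 4) (x : Fin 4 → ℝ) :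
    pd hopfF j x 0 = ![2*x 0, 2*x 1, 2*x 2, -(2*x 3)] j := by
  rw [pd_unfold]
  simp only [hopfF, Matrix.cons_val_zero]
  rw [fd0]; fin_cases j <;> simp [Pi.single_apply]

lemma pd_hopf1 (j : Fin 4) (x : Fin 4 → ℝ) :
    pd hopfF j x 1 = ![2*x 3, 0, 0, 2*x 0] j := by
  rw [pd_unfold]
  simp only [hopfF, Matrix.cons_val_one, Matrix.head_cons, Matrix.cons_val_zero]
  rw [fdm]; fin_cases j <;> simp [Pi.single_apply]

lemma pd_hopf2 (j : Fin 4) (x : Fin 4 → ℝ) :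
    pd hopfF j x 2 = ![0, 2*x 3, 0, 2*x 1] j := by
  rw [pd_unfold]
  simp only [hopfF, Matrix.cons_val_two, Matrix.tail_cons, Matrix.head_cons]
  rw [fdm]; fin_cases j <;> simp [Pi.single_apply]

lemma pd_hopf3 (j : Fin 4) (x : Fin 4 → ℝ) :
    pd hopfF j x 3 = ![0, 0, 2*x 3, 2*x 2] j := by
  rw [pd_unfold]
  simp only [hopfF, Matrix.cons_val_three, Matrix.tail_cons, Matrix.head_cons]
  rw [fdm]; fin_cases j <;> simp [Pi.single_apply]

lemma frobSq_hopf (x : Fin 4 → ℝ) :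
    frobSq hopfF x = 8 * ((x 0) ^ 2 + (x 1) ^ 2 + (x 2) ^ 2) + 16 * (x 3) ^ 2 := by
  simp only [frobSq, Fin.sum_univ_four, pd_hopf0, pd_hopf1, pd_hopf2, pd_hopf3]
  simp only [Matrix.cons_val_zero, Matrix.cons_val_one, Matrix.head_cons,
    Matrix.cons_val_two, Matrix.tail_cons, Matrix.cons_val_three]
  ring

theorem stmt17 :
    (∀ x : Fin 4 → ℝ,
      ∑ i, (hopfF x i) ^ 2 = ((x 0) ^ 2 + (x 1) ^ 2 + (x 2) ^ 2 + (x 3) ^ 2) ^ 2) ∧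
    (∀ x : Fin 4 → ℝ,
      frobSq hopfF x = 8 * ((x 0) ^ 2 + (x 1) ^ 2 + (x 2) ^ 2) + 16 * (x 3) ^ 2) ∧
    frobSq hopfF ![1, 0, 0, 0] = 8 ∧ frobSq hopfF ![0, 0, 0, 1] = 16 := by
  refine ⟨fun x => ?_, frobSq_hopf, ?_, ?_⟩
  · simp [hopfF, Fin.sum_univ_four]; ring
  · rw [frobSq_hopf]; norm_num [Matrix.cons_val_two, Matrix.cons_val_three, Matrix.tail_cons, Matrix.head_cons]
  · rw [frobSq_hopf]; norm_num [Matrix.cons_val_two, Matrix.cons_val_three, Matrix.tail_cons, Matrix.head_cons]
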